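/- Let w, w* ∈ ℝ^d be nonzero, θ = angle between them, and define G(w) = (1/2)(w − w*) + (1/(2π))(θ·w* − (‖w*‖/‖w‖)·sin θ·w). If 0 < ‖w − w*‖ < ‖w*‖ and w ≠ w*, then (w − w*)ᵀ G(w) > 0. -/
import Mathlib

open Real
open scoped RealInnerProductSpace

lemma key_scalar (a b θ : ℝ) (ha : 0 < a) (hb : 0 < b) (hθ0 : 0 < θ) (hθh : θ ≤ π/2)
    (hac : a < 2*b*Real.cos θ) :
    b*(a*(Real.sin θ - θ*Real.cos θ) + b*(θ - Real.sin θ*Real.cos θ))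
      < π*(a^2 + b^2 - 2*a*b*Real.cos θ) := by
  set c := Real.cos θ with hc
  set s := Real.sin θ with hs
  have hππ : 0 < π := pi_pos
  have hθπ : θ < π := lt_of_le_of_lt hθh (by linarith)
  have hs0 : 0 ≤ s := Real.sin_nonneg_of_nonneg_of_le_pi hθ0.le hθπ.le
  have hsθ : s ≤ θ := Real.sin_le hθ0.le
  have hc1 : c < 1 := by
    have := Real.cos_lt_cos_of_nonneg_of_le_pi (le_refl (0:ℝ)) hθπ.le hθ0
    simpa using this
  have htan : θ * c ≤ s := by
    rcases lt_or_eq_of_le hθh with h | h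
    · have ht := Real.lt_tan hθ0 h
      have hcpos : 0 < c := Real.cos_pos_of_mem_Ioo ⟨by linarith, h⟩
      rw [Real.tan_eq_sin_div_cos, lt_div_iff₀ hcpos] at ht
      linarith
    · have : c = 0 := by rw [hc, h, Real.cos_pi_div_two]
      nlinarith
  have h2' : θ - s*c ≤ 2*(θ*(1-c)) := by
    nlinarith [mul_nonneg (sub_nonneg.mpr hsθ) (sub_nonneg.mpr hc1.le)]
  have hA : a*(s - θ*c) + b*(θ - s*c) ≤ (a+2*b)*(θ*(1-c)) := by nlinarith
  have h3' : θ*(1-c) ≤ (π/2)*(1-c) := by nlinarith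
  have halg : (1/2)*(1-c)*(b*(a+2*b)) < a^2+b^2-2*a*b*c := by
    rcases le_or_gt (2*b) (3*a) with h | h
    · rcases eq_or_lt_of_le h with h' | h'
      · have hz : 3*a*b-2*b^2 = 0 := by nlinarith [mul_pos ha hb]
        nlinarith [sq_nonneg (a-b)]
      · have hp : (0:ℝ) < 3*a*b-2*b^2 := by nlinarith [mul_pos hb (show (0:ℝ) < 3*a-2*b by linarith)]
        nlinarith [sq_nonneg (a-b), mul_pos (sub_pos.mpr hc1) hp]
    · nlinarith [mul_pos (sub_pos.mpr hac) (by linarith : (0:ℝ) < 2*b-3*a)]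
  calc b*(a*(s - θ*c) + b*(θ - s*c))
      ≤ b*((a+2*b)*(θ*(1-c))) := by
        exact mul_le_mul_of_nonneg_left hA hb.le
    _ ≤ b*((a+2*b)*((π/2)*(1-c))) := by
        apply mul_le_mul_of_nonneg_left _ hb.le
        exact mul_le_mul_of_nonneg_left h3' (by linarith)
    _ = π*((1/2)*(1-c)*(b*(a+2*b))) := by ring
    _ < π*(a^2+b^2-2*a*b*c) := by exact mul_lt_mul_of_pos_left halg hππ





theorem lyapunov_decrease (d : ℕ) (w wstar : EuclideanSpace ℝ (Fin d))
    (hw : w ≠ 0) (hwstar : wstar ≠ 0) (hne : w ≠ wstar)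
    (h0 : 0 < ‖w - wstar‖) (h1 : ‖w - wstar‖ < ‖wstar‖)
    (θ : ℝ) (hθ : θ = Real.arccos (⟪w, wstar⟫ / (‖w‖ * ‖wstar‖))) :
    0 < ⟪w - wstar,
        (1 / 2 : ℝ) • (w - wstar) +
          (1 / (2 * Real.pi)) •
            (θ • wstar - ((‖wstar‖ / ‖w‖) * Real.sin θ) • w)⟫ := by
  have ha : 0 < ‖w‖ := norm_pos_iff.mpr hw
  have hb : 0 < ‖wstar‖ := norm_pos_iff.mpr hwstar
  set a := ‖w‖ with hadef
  set b := ‖wstar‖ with hbdef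
  set ip := (⟪w, wstar⟫ : ℝ) with hipdef
  have hππ : 0 < π := Real.pi_pos
  have hCS : |ip| ≤ a * b := abs_real_inner_le_norm w wstar
  have habpos : 0 < a * b := mul_pos ha hb
  have hx1 : -1 ≤ ip / (a * b) := by
    rw [le_div_iff₀ habpos]; nlinarith [abs_le.mp hCS]
  have hx2 : ip / (a * b) ≤ 1 := by
    rw [div_le_one habpos]; nlinarith [abs_le.mp hCS]
  have hcos : Real.cos θ = ip / (a * b) := by rw [hθ, Real.cos_arccos hx1 hx2]
  have hip : ip = a * b * Real.cos θ := by
    rw [hcos]; field_simp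
  have hθ0 : 0 ≤ θ := hθ ▸ Real.arccos_nonneg _
  have hn2 : ‖w - wstar‖ ^ 2 = a ^ 2 - 2 * ip + b ^ 2 := norm_sub_sq_real w wstar
  have hpos : 0 < a ^ 2 - 2 * ip + b ^ 2 := by
    rw [← hn2]; positivity
  have hlt : a ^ 2 - 2 * ip + b ^ 2 < b ^ 2 := by
    rw [← hn2]
    exact pow_lt_pow_left₀ h1 (norm_nonneg _) two_ne_zero
  have hip_pos : a ^ 2 < 2 * ip := by linarith
  have hac : a < 2 * b * Real.cos θ := by
    rw [hip] at hip_pos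
    nlinarith
  have hθh : θ ≤ π / 2 := by
    rw [hθ, Real.arccos_le_pi_div_two]
    exact div_nonneg (by nlinarith) habpos.le
  have e1 : (⟪w - wstar, wstar⟫ : ℝ) = ip - b ^ 2 := by
    rw [inner_sub_left, real_inner_self_eq_norm_sq]
  have e2 : (⟪w - wstar, w⟫ : ℝ) = a ^ 2 - ip := by
    rw [inner_sub_left, real_inner_self_eq_norm_sq, real_inner_comm]
  simp only [inner_add_right, inner_sub_right, real_inner_smul_right]
  rw [e1, e2]
  rcases eq_or_lt_of_le hθ0 with h0' | h0'
  · rw [← h0']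
    simp only [Real.sin_zero, zero_mul, mul_zero, sub_zero, zero_sub]
    nlinarith
  · have key := key_scalar a b θ ha hb h0' hθh hac
    have hexp : 1 / 2 * (a ^ 2 - ip - (ip - b ^ 2)) +
        1 / (2 * π) * (θ * (ip - b ^ 2) - b / a * Real.sin θ * (a ^ 2 - ip)) =
        (π * (a ^ 2 + b ^ 2 - 2 * a * b * Real.cos θ) -
          b * (a * (Real.sin θ - θ * Real.cos θ) + b * (θ - Real.sin θ * Real.cos θ))) / (2 * π) := by
      rw [hip]
      field_simp
      ring
    rw [hexp]
    exact div_pos (by linarith) (by linarith)
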